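/- The circle through M, P₁ and the cusp P₁' osculates the ellipse E at P₁, and its center lies on the evolute of E. Precisely, let P₁'' = (c² cos³(u/3)/a, c² sin³(u/3)/b) and r² = |P₁ − P₁''|². Then |M − P₁''|² = r², |P₁' − P₁''|² = r², and the function g(t) = |P(t) − P₁''|² − r² satisfies g(t₁) = 0, g'(t₁) = 0 and g''(t₁) = 0 at t₁ = −u/3 (third-order contact of the circle with E at P₁). -/

import Mathlib

open Real

noncomputable def ellipsePt (a b t : ℝ) : ℝ × ℝ := (a * cos t, b * sin t)

noncomputable def steinerHat (a b u t : ℝ) : ℝ × ℝ :=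
  (((a ^ 2 - b ^ 2) * (1 + cos (t + u)) * cos t - a ^ 2 * cos u) / a,
   ((a ^ 2 - b ^ 2) * cos t * sin (t + u) - (a ^ 2 - b ^ 2) * sin t - a ^ 2 * sin u) / b)

/-- Squared distance in ℝ². -/
def sqDist (p q : ℝ × ℝ) : ℝ := (p.1 - q.1) ^ 2 + (p.2 - q.2) ^ 2

theorem hderiv (a b u X Y r2 : ℝ) (g : ℝ → ℝ) (P₁'' : ℝ × ℝ)
    (hg : g = fun t => sqDist (ellipsePt a b t) P₁'' - r2)
    (hP₁'' : P₁'' = (X, Y)) :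
    deriv g = fun t => 2*((a*cos t - X)*(a*-sin t)) + 2*((b*sin t - Y)*(b*cos t)) := by
  funext t
  have hgfun : g = fun t => (a*cos t - X)^2 + (b*sin t - Y)^2 - r2 := by
    rw [hg, hP₁'']; rfl
  have h := (((((Real.hasDerivAt_cos t).const_mul a).sub_const X).pow 2).add
    ((((Real.hasDerivAt_sin t).const_mul b).sub_const Y).pow 2)).sub_const r2
  rw [hgfun]
  have h2 : (2:ℝ) * (a*cos t - X)^(2-1) * (a * -sin t) + (2:ℝ) * (b*sin t - Y)^(2-1) * (b * cos t)
      = 2*((a*cos t - X)*(a*-sin t)) + 2*((b*sin t - Y)*(b*cos t)) := by norm_num; ring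
  rw [← h2]
  exact h.deriv

/-- the circle through `M`, `P₁` and the cusp `P₁'`, centered at the evolute
point `P₁'' = (c² cos³(u/3)/a, c² sin³(u/3)/b)`, osculates the ellipse at `P₁`
(third-order contact). -/
theorem stmt6 (a b u : ℝ) (hb : 0 < b) (hab : b < a)
    (M P₁ P₁' P₁'' : ℝ × ℝ) (r2 : ℝ) (g : ℝ → ℝ)
    (hM : M = ellipsePt a b u)
    (hP₁ : P₁ = ellipsePt a b (-u / 3))
    (hP₁' : P₁' = steinerHat a b u (-u / 3))
    (hP₁'' : P₁'' = ((a ^ 2 - b ^ 2) * (cos (u / 3)) ^ 3 / a,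
                     (a ^ 2 - b ^ 2) * (sin (u / 3)) ^ 3 / b))
    (hr2 : r2 = sqDist P₁ P₁'')
    (hg : g = fun t => sqDist (ellipsePt a b t) P₁'' - r2) :
    sqDist M P₁'' = r2 ∧
    sqDist P₁' P₁'' = r2 ∧
    g (-u / 3) = 0 ∧
    deriv g (-u / 3) = 0 ∧
    deriv (deriv g) (-u / 3) = 0 := by
  have ha' : a ≠ 0 := by linarith
  have hb' : b ≠ 0 := hb.ne'
  have hp : sin (u/3)^2 + cos (u/3)^2 = 1 := sin_sq_add_cos_sq (u/3)
  have h1 : cos u = 4*cos (u/3)^3 - 3*cos (u/3) := by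
    rw [show u = 3*(u/3) by ring, cos_three_mul]; norm_num
  have h2 : sin u = 3*sin (u/3) - 4*sin (u/3)^3 := by
    rw [show u = 3*(u/3) by ring, sin_three_mul]; norm_num
  have h3 : cos (-u/3) = cos (u/3) := by rw [show -u/3 = -(u/3) by ring, cos_neg]
  have h4 : sin (-u/3) = -sin (u/3) := by rw [show -u/3 = -(u/3) by ring, sin_neg]
  have h5 : cos (-u/3 + u) = 2*cos (u/3)^2 - 1 := by
    rw [show -u/3 + u = 2*(u/3) by ring, cos_two_mul]
  have h6 : sin (-u/3 + u) = 2*sin (u/3)*cos (u/3) := by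
    rw [show -u/3 + u = 2*(u/3) by ring, sin_two_mul]
  set X : ℝ := (a ^ 2 - b ^ 2) * (cos (u / 3)) ^ 3 / a with hX
  set Y : ℝ := (a ^ 2 - b ^ 2) * (sin (u / 3)) ^ 3 / b with hY
  have hr2' : r2 = (a * cos (-u/3) - X)^2 + (b * sin (-u/3) - Y)^2 := by
    rw [hr2, hP₁, hP₁'']; rfl
  refine ⟨?_, ?_, ?_, ?_, ?_⟩
  · rw [hM, hP₁'', hr2']
    simp only [sqDist, ellipsePt, h1, h2, h3, h4, hX, hY]
    field_simp
    linear_combination (8*a^2*b^4*cos (u/3)^4 - 8*a^2*b^4*sin (u/3)^2 - 8*a^2*b^4*sin (u/3)^2*cos (u/3)^2 + 8*a^2*b^4*sin (u/3)^4 - 8*a^4*b^2*cos (u/3)^2 + 8*a^4*b^2*cos (u/3)^4 - 8*a^4*b^2*sin (u/3)^2*cos (u/3)^2 + 8*a^4*b^2*sin (u/3)^4) * hp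
  · rw [hP₁', hP₁'', hr2']
    simp only [sqDist, steinerHat, h1, h2, h3, h4, h5, h6, hX, hY]
    field_simp
    linear_combination (8*a^2*b^4*cos (u/3)^4 - 4*a^2*b^4*sin (u/3)^2*cos (u/3)^2 - 8*a^4*b^2*cos (u/3)^2 + 8*a^4*b^2*cos (u/3)^4 - 4*a^4*b^2*sin (u/3)^2 - 16*a^4*b^2*sin (u/3)^2*cos (u/3)^2 + 8*a^4*b^2*sin (u/3)^4 - 4*a^6*sin (u/3)^2 + 4*a^6*sin (u/3)^2*cos (u/3)^2 + 8*a^6*sin (u/3)^4) * hp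
  · rw [hg]; simp only [hr2, hP₁]; ring
  · rw [hderiv a b u X Y r2 g P₁'' hg hP₁'']
    simp only [h3, h4, hX, hY]
    field_simp
    linear_combination (2*b^2*sin (u/3)*cos (u/3) - 2*a^2*sin (u/3)*cos (u/3)) * hp
  · rw [hderiv a b u X Y r2 g P₁'' hg hP₁'']
    have hA := (((Real.hasDerivAt_cos (-u/3)).const_mul a).sub_const X).mul
      (((Real.hasDerivAt_sin (-u/3)).neg).const_mul a) |>.const_mul 2
    have hF := (((Real.hasDerivAt_sin (-u/3)).const_mul b).sub_const Y).mul
      ((Real.hasDerivAt_cos (-u/3)).const_mul b) |>.const_mul 2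
    have hAF : HasDerivAt (fun t => 2 * ((a * cos t - X) * (a * -sin t)) + 2 * ((b * sin t - Y) * (b * cos t))) _ (-u/3) := hA.add hF
    rw [hAF.deriv]
    simp only [Pi.neg_apply, h3, h4, hX, hY]
    field_simp
    linear_combination (-2*b^2*cos (u/3)^2 + 2*b^2*sin (u/3)^2 + 2*a^2*cos (u/3)^2 - 2*a^2*sin (u/3)^2) * hp
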